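/- Let w(z) = z⁴ + w₃z³ + w₂z² + w₁z + w₀ have four distinct roots r₁, r₂, r₃, r₄ whose cross ratio Δ = [r₁,r₂,r₃,r₄] belongs to {-j, -j²} where j = e^{2πi/3} (equivalently, the roots form a regular ideal tetrahedron). Then w₂² + 12w₀ - 3w₁w₃ = 0. Conversely, if w₂² + 12w₀ - 3w₁w₃ = 0 and the roots are distinct, then the cross ratio of the roots lies in {-j, -j²}. -/

import Mathlib

/-- Let `w(z) = z⁴ + w₃z³ + w₂z² + w₁z + w₀` have four distinct roots with cross ratio
`Δ`. Then `Δ ∈ {-j, -j²}` (`j = e^{2πi/3}`, i.e. the roots form a regular ideal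
tetrahedron) if and only if `w₂² + 12w₀ - 3w₁w₃ = 0`. -/
theorem regular_tetrahedron_iff_discriminant_relation
    (r : Fin 4 → ℂ) (hr : Function.Injective r)
    (j : ℂ) (hj : j = Complex.exp (2 * Real.pi * Complex.I / 3))
    (w₀ w₁ w₂ w₃ Δ : ℂ)
    (hw₃ : w₃ = -(r 0 + r 1 + r 2 + r 3))
    (hw₂ : w₂ = r 0 * r 1 + r 0 * r 2 + r 0 * r 3 + r 1 * r 2 + r 1 * r 3 + r 2 * r 3)
    (hw₁ : w₁ = -(r 0 * r 1 * r 2 + r 0 * r 1 * r 3 + r 0 * r 2 * r 3 + r 1 * r 2 * r 3))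
    (hw₀ : w₀ = r 0 * r 1 * r 2 * r 3)
    (hΔ : Δ = (r 0 - r 2) * (r 1 - r 3) / ((r 2 - r 1) * (r 3 - r 0))) :
    (Δ = -j ∨ Δ = -j ^ 2) ↔ w₂ ^ 2 + 12 * w₀ - 3 * w₁ * w₃ = 0 := by
  -- j is a primitive cube root of unity
  have hp : IsPrimitiveRoot j 3 := by
    rw [hj]
    have := Complex.isPrimitiveRoot_exp 3 (by norm_num)
    convert this using 3
    norm_num
  have hj3 : j ^ 3 = 1 := hp.pow_eq_one
  have hjne1 : j ≠ 1 := hp.ne_one (by norm_num)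
  have hsum : j ^ 2 + j + 1 = 0 := by
    have hmul : (j - 1) * (j ^ 2 + j + 1) = 0 := by linear_combination hj3
    exact (mul_eq_zero.mp hmul).resolve_left (sub_ne_zero.mpr hjne1)
  -- denominator nonzero
  have h21 : r 2 ≠ r 1 := fun h => absurd (hr h) (by decide)
  have h30 : r 3 ≠ r 0 := fun h => absurd (hr h) (by decide)
  have hB : (r 2 - r 1) * (r 3 - r 0) ≠ 0 :=
    mul_ne_zero (sub_ne_zero.mpr h21) (sub_ne_zero.mpr h30)
  have hA : (r 0 - r 2) * (r 1 - r 3) = Δ * ((r 2 - r 1) * (r 3 - r 0)) := by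
    rw [hΔ]; field_simp
  subst hw₀ hw₁ hw₂ hw₃
  constructor
  · intro h
    have hq : Δ ^ 2 - Δ + 1 = 0 := by
      rcases h with h | h <;> rw [h]
      · linear_combination hsum
      · linear_combination hsum + j * hj3
    linear_combination
      ((r 0 - r 2) * (r 1 - r 3) + Δ * ((r 2 - r 1) * (r 3 - r 0))
        - (r 2 - r 1) * (r 3 - r 0)) * hA
      + ((r 2 - r 1) * (r 3 - r 0)) ^ 2 * hq
  · intro h
    have hmul : ((r 2 - r 1) * (r 3 - r 0)) ^ 2 * (Δ ^ 2 - Δ + 1) = 0 := by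
      linear_combination h - ((r 0 - r 2) * (r 1 - r 3)
        + Δ * ((r 2 - r 1) * (r 3 - r 0)) - (r 2 - r 1) * (r 3 - r 0)) * hA
    have hq : Δ ^ 2 - Δ + 1 = 0 :=
      (mul_eq_zero.mp hmul).resolve_left (pow_ne_zero 2 hB)
    have hfac : (Δ + j) * (Δ + j ^ 2) = 0 := by
      linear_combination hq + Δ * hsum + hj3
    rcases mul_eq_zero.mp hfac with h' | h'
    · exact Or.inl (eq_neg_of_add_eq_zero_left h')
    · exact Or.inr (eq_neg_of_add_eq_zero_left h')
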